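/- If D is a strong oriented graph such that for every vertex x, x⁺ induces a tournament and x⁻ induces an acyclic digraph, then there exists a cyclic order of the vertices of D such that for every arc xy and every z in the cyclic interval ]x,y[, zy is an arc of D. -/

import Mathlib

/-- `A` is the arc relation of an oriented graph: no loops and no digons. -/
def IsOriented {V : Type*} (A : V → V → Prop) : Prop :=
  Irreflexive A ∧ ∀ x y, A x y → ¬ A y x

/-- `D` is strong: a directed path between each ordered pair of vertices. -/
def IsStrong {V : Type*} (A : V → V → Prop) : Prop :=
  ∀ x y : V, Relation.ReflTransGen A x y

/-- The set `S` induces a strong subdigraph (all paths staying inside `S`). -/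
def StrongOn {V : Type*} (A : V → V → Prop) (S : Set V) : Prop :=
  ∀ x ∈ S, ∀ y ∈ S, Relation.ReflTransGen (fun a b => a ∈ S ∧ b ∈ S ∧ A a b) x y

/-- The set `S` induces a tournament. -/
def TournamentOn {V : Type*} (A : V → V → Prop) (S : Set V) : Prop :=
  ∀ x ∈ S, ∀ y ∈ S, x ≠ y → A x y ∨ A y x

/-- The set `S` induces an acyclic digraph. -/
def AcyclicOn {V : Type*} (A : V → V → Prop) (S : Set V) : Prop :=
  ∀ x : V, ¬ Relation.TransGen (fun a b => a ∈ S ∧ b ∈ S ∧ A a b) x x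

/-- The set `S` induces a semicomplete digraph. -/
def SemicompleteOn {V : Type*} (A : V → V → Prop) (S : Set V) : Prop :=
  ∀ x ∈ S, ∀ y ∈ S, x ≠ y → A x y ∨ A y x

/-- `z` lies strictly inside the cyclic interval `]x,y[` for the cyclic order `σ`. -/
def CycBtw {V : Type*} [Fintype V] (σ : V ≃ Fin (Fintype.card V)) (x z y : V) : Prop :=
  0 < (σ z - σ x).val ∧ (σ z - σ x).val < (σ y - σ x).val

/-- In-round: a cyclic order such that for every arc `xy` and `z ∈ ]x,y[`, `zy` is an arc. -/
def InRound {V : Type*} [Fintype V] (A : V → V → Prop) : Prop :=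
  ∃ σ : V ≃ Fin (Fintype.card V), ∀ x y z : V, A x y → CycBtw σ x z y → A z y

/-- Out-round: a cyclic order such that for every arc `xy` and `z ∈ ]x,y[`, `xz` is an arc. -/
def OutRound {V : Type*} [Fintype V] (A : V → V → Prop) : Prop :=
  ∃ σ : V ≃ Fin (Fintype.card V), ∀ x y z : V, A x y → CycBtw σ x z y → A x z

/-- Every out-neighbourhood induces a transitive tournament. -/
def LocallyOutTransitive {V : Type*} (A : V → V → Prop) : Prop :=
  ∀ x : V, TournamentOn A {y | A x y} ∧ AcyclicOn A {y | A x y}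

/-- A hub: a nonempty set inducing a strong subdigraph, all of whose vertices are
in-neighbours of some vertex outside of it. -/
def Hub {V : Type*} (A : V → V → Prop) (H : Set V) : Prop :=
  H.Nonempty ∧ StrongOn A H ∧ ∃ x ∉ H, ∀ h ∈ H, A h x

/-- Locally semicomplete digraph: no loops, and every out- and in-neighbourhood
induces a semicomplete digraph (digons are allowed). -/
def LocallySemicomplete {V : Type*} (A : V → V → Prop) : Prop :=
  Irreflexive A ∧ (∀ x : V, SemicompleteOn A {y | A x y}) ∧
    ∀ x : V, SemicompleteOn A {y | A y x}

/-- The underlying undirected graph is connected. -/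
def ConnectedDigraph {V : Type*} (A : V → V → Prop) : Prop :=
  ∀ x y : V, Relation.ReflTransGen (fun a b => A a b ∨ A b a) x y

/-- A weak hub: a nonempty set inducing a strong subdigraph that is strictly
in-dominated or strictly out-dominated by some vertex outside of it. -/
def WeakHub {V : Type*} (A : V → V → Prop) (X : Set V) : Prop :=
  X.Nonempty ∧ StrongOn A X ∧
    ∃ x ∉ X, (∀ u ∈ X, A u x ∧ ¬ A x u) ∨ ∀ u ∈ X, A x u ∧ ¬ A u x

/-- A set `X` is mixed if some outside vertex has both an out-neighbour and an
in-neighbour in `X`. -/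
def MixedSet {V : Type*} (A : V → V → Prop) (X : Set V) : Prop :=
  ∃ x ∉ X, (∃ u ∈ X, A x u) ∧ ∃ v ∈ X, A v x

/-- `X` is an inclusion-wise maximal weak hub. -/
def MaxWeakHub {V : Type*} (A : V → V → Prop) (X : Set V) : Prop :=
  WeakHub A X ∧ ∀ Y : Set V, WeakHub A Y → X ⊆ Y → Y = X

namespace Stmt1Aux

variable {V : Type*} {A : V → V → Prop}

/-- Extract an indexed path from a `ReflTransGen`. -/
lemma rtg_exists_path {u v : V} (h : Relation.ReflTransGen A u v) :
    ∃ (k : ℕ) (p : ℕ → V), p 0 = u ∧ p k = v ∧ ∀ i < k, A (p i) (p (i + 1)) := by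
  induction h with
  | refl => exact ⟨0, fun _ => u, rfl, rfl, fun i hi => by omega⟩
  | @tail b c hub hbc ih =>
    obtain ⟨k, p, h0, hk, harc⟩ := ih
    refine ⟨k + 1, fun i => if i = k + 1 then c else p i, by simp [h0], by simp, ?_⟩
    intro i hi
    rcases Nat.lt_or_ge i k with h | h
    · simpa [Nat.ne_of_lt (by omega : i < k + 1), Nat.ne_of_lt (by omega : i + 1 < k + 1), Nat.ne_of_lt h]
        using harc i h
    · have hik : i = k := by omega
      subst hik
      simpa [Nat.ne_of_lt (by omega : i < i + 1), hk] using hbc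

/-- The common final contradiction step. -/
lemma core2
    (hloc : ∀ x : V, TournamentOn A {y | A x y} ∧ AcyclicOn A {y | A y x})
    {x wm w1 : V} {k0 : ℕ} {p : ℕ → V}
    (hpk : p k0 = x) (harc : ∀ i < k0, A (p i) (p (i + 1))) (hk0 : 1 ≤ k0)
    (hne : ∀ i, 1 ≤ i → i ≤ k0 → p i ≠ w1)
    (hxw1 : A x w1) (hxwm : A x wm) (hwm1 : A wm w1) (hwmz : A wm (p 1))
    (hz1 : A (p 1) w1)
    (hshort : ∀ i, 1 ≤ i → i < k0 → ¬ A w1 (p (i + 1))) : False := by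
  have chain : ∀ i, 1 ≤ i → i ≤ k0 → A (p i) w1 := by
    intro i
    induction i with
    | zero => omega
    | succ m ih =>
      intro _ h2
      rcases Nat.eq_zero_or_pos m with hm | hm
      · subst hm; exact hz1
      · have hA := ih hm (by omega)
        have harc' := harc m (by omega)
        have hnew : p (m + 1) ≠ w1 := hne (m + 1) (by omega) h2
        rcases (hloc (p m)).1 w1 hA (p (m + 1)) harc' hnew.symm with h | h
        · exact absurd h (hshort m hm (by omega))
        · exact h
  have hTG : ∀ i, 1 ≤ i → i ≤ k0 →
      Relation.TransGen
        (fun a b => a ∈ {y | A y w1} ∧ b ∈ {y | A y w1} ∧ A a b) wm (p i) := by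
    intro i
    induction i with
    | zero => omega
    | succ m ih =>
      intro _ h2
      rcases Nat.eq_zero_or_pos m with hm | hm
      · subst hm; exact Relation.TransGen.single ⟨hwm1, hz1, hwmz⟩
      · exact (ih hm (by omega)).tail
          ⟨chain m hm (by omega), chain (m + 1) (by omega) h2, harc m (by omega)⟩
  have hfin := (hTG k0 hk0 le_rfl).tail
    (show p k0 ∈ {y | A y w1} ∧ wm ∈ {y | A y w1} ∧ A (p k0) wm from
      ⟨by rw [hpk]; exact hxw1, hwm1, by rw [hpk]; exact hxwm⟩)
  exact (hloc w1).2 wm hfin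

/-- Core lemma: no directed triangle in an out-neighbourhood (path version). -/
lemma no_c3_aux (hor : IsOriented A)
    (hloc : ∀ x : V, TournamentOn A {y | A x y} ∧ AcyclicOn A {y | A y x})
    {x a b c : V}
    (hxa : A x a) (hxb : A x b) (hxc : A x c)
    (hab : A a b) (hbc : A b c) (hca : A c a)
    {k0 : ℕ} {p : ℕ → V} (hp0 : p 0 = a) (hpk : p k0 = x)
    (harc : ∀ i < k0, A (p i) (p (i + 1)))
    (hmin : ∀ k, k < k0 → ∀ q : ℕ → V, (q 0 = a ∨ q 0 = b ∨ q 0 = c) →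
      q k = x → (∀ i < k, A (q i) (q (i + 1))) → False) : False := by
  have hxna : x ≠ a := by rintro rfl; exact hor.1 x hxa
  have hxnb : x ≠ b := by rintro rfl; exact hor.1 x hxb
  have hxnc : x ≠ c := by rintro rfl; exact hor.1 x hxc
  have hk0 : 2 ≤ k0 := by
    match k0, hpk, harc with
    | 0, hpk, _ => rw [hp0] at hpk; exact absurd hpk.symm hxna
    | 1, hpk, harc =>
      have h01 := harc 0 (by omega)
      rw [hp0, hpk] at h01
      exact absurd h01 (hor.2 x a hxa)
    | (k+2), _, _ => omega
  have hint : ∀ i, 1 ≤ i → i < k0 → ¬ (p i = a ∨ p i = b ∨ p i = c) := by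
    intro i h1 h2 hmem
    refine hmin (k0 - i) (by omega) (fun j => p (i + j)) hmem ?_ ?_
    · show p (i + (k0 - i)) = x
      rw [Nat.add_sub_cancel' (le_of_lt h2)]; exact hpk
    · intro j hj
      exact harc (i + j) (by omega)
  have hz1def : A a (p 1) := by
    have := harc 0 (by omega); rwa [hp0] at this
  have hint1 := hint 1 le_rfl (by omega)
  push_neg at hint1
  -- helper producing `hshort` for `core2`, for w1 = b or w1 = c
  have mkshort : ∀ w1 : V, (w1 = a ∨ w1 = b ∨ w1 = c) →
      ∀ i, 1 ≤ i → i < k0 → ¬ A w1 (p (i + 1)) := by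
    intro w1 hw1 i h1 h2 hw
    refine hmin (k0 - i) (by omega) (fun j => if j = 0 then w1 else p (i + j))
      (by simpa using hw1) ?_ ?_
    · have : k0 - i ≠ 0 := by omega
      simp only [this, if_false]
      rw [Nat.add_sub_cancel' (le_of_lt h2)]; exact hpk
    · intro j hj
      rcases Nat.eq_zero_or_pos j with hj0 | hj0
      · subst hj0
        simpa using hw
      · have hj1 : j ≠ 0 := by omega
        have hj2 : j + 1 ≠ 0 := by omega
        simp only [hj1, hj2, if_false]
        exact harc (i + j) (by omega)
  have hneFor : ∀ w1 : V, (w1 = b ∨ w1 = c) → ∀ i, 1 ≤ i → i ≤ k0 → p i ≠ w1 := by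
    intro w1 hw1 i h1 h2
    rcases Nat.lt_or_ge i k0 with h | h
    · have := hint i h1 h
      rcases hw1 with rfl | rfl <;> tauto
    · have : i = k0 := by omega
      subst this
      rw [hpk]
      rcases hw1 with rfl | rfl
      · exact hxnb
      · exact hxnc
  by_cases hb1 : A b (p 1)
  · by_cases hc1 : A c (p 1)
    · exact (hloc (p 1)).2 a
        (Relation.TransGen.head ⟨hz1def, hb1, hab⟩
          (Relation.TransGen.head ⟨hb1, hc1, hbc⟩
            (Relation.TransGen.single ⟨hc1, hz1def, hca⟩)))
    · -- w1 = c, wm = b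
      have hzc : A (p 1) c := by
        rcases (hloc b).1 c hbc (p 1) hb1 (fun h => hint1.2.2 h.symm) with h | h
        · exact absurd h hc1
        · exact h
      exact core2 hloc hpk harc (by omega) (hneFor c (Or.inr rfl))
        hxc hxb hbc hb1 hzc (mkshort c (Or.inr (Or.inr rfl)))
  · -- w1 = b, wm = a
    have hzb : A (p 1) b := by
      rcases (hloc a).1 b hab (p 1) hz1def (fun h => hint1.2.1 h.symm) with h | h
      · exact absurd h hb1
      · exact h
    exact core2 hloc hpk harc (by omega) (hneFor b (Or.inl rfl))
      hxb hxa hab hz1def hzb (mkshort b (Or.inr (Or.inl rfl)))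

/-- No directed triangle in any out-neighbourhood. -/
lemma no_c3 (hor : IsOriented A) (hstrong : IsStrong A)
    (hloc : ∀ x : V, TournamentOn A {y | A x y} ∧ AcyclicOn A {y | A y x})
    {x a b c : V}
    (hxa : A x a) (hxb : A x b) (hxc : A x c)
    (hab : A a b) (hbc : A b c) (hca : A c a) : False := by
  classical
  have hex : ∃ k, ∃ q : ℕ → V, (q 0 = a ∨ q 0 = b ∨ q 0 = c) ∧ q k = x ∧
      ∀ i < k, A (q i) (q (i + 1)) := by
    obtain ⟨k, p, h0, hk, harc⟩ := rtg_exists_path (hstrong a x)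
    exact ⟨k, p, Or.inl h0, hk, harc⟩
  obtain ⟨q, hq0, hqk, hqarc⟩ := Nat.find_spec hex
  have hmin : ∀ k, k < Nat.find hex → ∀ r : ℕ → V, (r 0 = a ∨ r 0 = b ∨ r 0 = c) →
      r k = x → (∀ i < k, A (r i) (r (i + 1))) → False :=
    fun k hk r h1 h2 h3 => Nat.find_min hex hk ⟨r, h1, h2, h3⟩
  rcases hq0 with h | h | h
  · exact no_c3_aux hor hloc hxa hxb hxc hab hbc hca h hqk hqarc hmin
  · exact no_c3_aux hor hloc hxb hxc hxa hbc hca hab h hqk hqarc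
      (fun k hk r h1 h2 h3 => hmin k hk r (by tauto) h2 h3)
  · exact no_c3_aux hor hloc hxc hxa hxb hca hab hbc h hqk hqarc
      (fun k hk r h1 h2 h3 => hmin k hk r (by tauto) h2 h3)

/-- Every nonempty out-neighbourhood has a dominant source. -/
lemma dom [Fintype V] (hor : IsOriented A) (hstrong : IsStrong A)
    (hloc : ∀ x : V, TournamentOn A {y | A x y} ∧ AcyclicOn A {y | A y x})
    (x : V) (hex : ∃ y, A x y) :
    ∃ s, A x s ∧ ∀ y, A x y → y ≠ s → A s y := by
  classical
  have htr : ∀ u v w, A x u → A x v → A x w → A u v → A v w → A u w := by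
    intro u v w hu hv hw huv hvw
    have hne : u ≠ w := by rintro rfl; exact hor.2 u v huv hvw
    rcases (hloc x).1 u hu w hw hne with h | h
    · exact h
    · exact absurd h (fun h => no_c3 hor hstrong hloc hu hv hw huv hvw h)
  let F : Finset V := Finset.univ.filter fun y => A x y
  have hmemF : ∀ {y}, y ∈ F ↔ A x y := by
    intro y; simp [F]
  obtain ⟨y0, hy0⟩ := hex
  obtain ⟨s, hsF, hsmin⟩ :=
    F.exists_min_image (fun u => (F.filter fun z => A z u).card) ⟨y0, hmemF.mpr hy0⟩
  have hsA : A x s := hmemF.mp hsF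
  refine ⟨s, hsA, ?_⟩
  intro y hy hne
  rcases (hloc x).1 s hsA y hy (fun h => hne h.symm) with h | h
  · exact h
  · exfalso
    have hsub : (F.filter fun z => A z y) ⊂ F.filter fun z => A z s := by
      rw [Finset.ssubset_def]
      constructor
      · intro z hz
        rw [Finset.mem_filter] at hz ⊢
        exact ⟨hz.1, htr z y s (hmemF.mp hz.1) hy hsA hz.2 h⟩
      · intro hcon
        have hymem : y ∈ F.filter fun z => A z s :=
          Finset.mem_filter.mpr ⟨hmemF.mpr hy, h⟩
        have := Finset.mem_filter.mp (hcon hymem)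
        exact hor.1 y this.2
    have h1 := Finset.card_lt_card hsub
    have h2 := hsmin y (hmemF.mpr hy)
    omega

lemma finCongr_add_one {p n : ℕ} [NeZero n] (h : p = n) (i : Fin p) :
    haveI : NeZero p := h ▸ ‹NeZero n›
    finCongr h (i + 1) = finCongr h i + 1 := by
  subst h; rfl

open Fin.NatCast in
/-- The final assembly given the dominant-source successor function and its cycle. -/
lemma final [Fintype V] [NeZero (Fintype.card V)] (hn : 2 ≤ Fintype.card V)
    (f : V → V) (hf2 : ∀ x y, A x y → y ≠ f x → A (f x) y)
    (g : Fin (Fintype.card V) → V) (hbij : Function.Bijective g)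
    (hg : ∀ i, f (g i) = g (i + 1)) : InRound A := by
  let E : Fin (Fintype.card V) ≃ V := Equiv.ofBijective g hbij
  refine ⟨E.symm, ?_⟩
  have hgs : ∀ z : V, g (E.symm z) = z := fun z => E.apply_symm_apply z
  have hsg : ∀ j, E.symm (g j) = j := fun j => E.symm_apply_apply j
  have hstep : ∀ z : V, E.symm (f z) = E.symm z + 1 := by
    intro z
    have h1 : f z = g (E.symm z + 1) := by rw [← hg (E.symm z), hgs]
    rw [h1, hsg]
  have hone : ((1 : Fin (Fintype.card V))).val = 1 := by
    rw [Fin.val_one', Nat.mod_eq_of_lt hn]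
  have chain : ∀ m : ℕ, ∀ x y : V, A x y → 1 ≤ m → m < (E.symm y - E.symm x).val →
      A (g (E.symm x + (m : Fin (Fintype.card V)))) y := by
    intro m
    induction m with
    | zero => omega
    | succ m ih =>
      intro x y hxy _ hlt
      rcases Nat.eq_zero_or_pos m with hm | hm
      · subst hm
        have hfx : g (E.symm x + ((0 + 1 : ℕ) : Fin (Fintype.card V))) = f x := by
          rw [show ((0 + 1 : ℕ) : Fin (Fintype.card V)) = 1 by norm_num,
            ← hstep x, hgs]
        rw [hfx]
        have hney : y ≠ f x := by
          rintro rfl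
          rw [hstep x, add_sub_cancel_left, hone] at hlt
          omega
        exact hf2 x y hxy hney
      · have hx' := ih x y hxy hm (by omega)
        have hσx' : E.symm (g (E.symm x + (m : Fin (Fintype.card V))))
            = E.symm x + (m : Fin (Fintype.card V)) := hsg _
        have hfx' : f (g (E.symm x + (m : Fin (Fintype.card V))))
            = g (E.symm x + ((m + 1 : ℕ) : Fin (Fintype.card V))) := by
          rw [← hgs (f (g (E.symm x + (m : Fin (Fintype.card V))))), hstep, hσx']
          congr 1
          push_cast
          exact add_assoc _ _ _
        have hney : y ≠ f (g (E.symm x + (m : Fin (Fintype.card V)))) := by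
          rintro rfl
          rw [hfx', hsg, add_sub_cancel_left] at hlt
          have hv : (((m + 1 : ℕ) : Fin (Fintype.card V))).val
              = (m + 1) % Fintype.card V := by
            rw [Fin.val_natCast]
          rw [hv] at hlt
          have := Nat.mod_le (m + 1) (Fintype.card V)
          omega
        have := hf2 _ y hx' hney
        rwa [hfx'] at this
  intro x y z hxy hbtw
  obtain ⟨h0, hlt⟩ := hbtw
  have hch := chain ((E.symm z - E.symm x).val) x y hxy h0 hlt
  rwa [Fin.cast_val_eq_self, add_comm, sub_add_cancel, hgs] at hch

end Stmt1Aux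

theorem stmt1 {V : Type*} [Fintype V] (A : V → V → Prop)
    (hor : IsOriented A) (hstrong : IsStrong A)
    (hloc : ∀ x : V, TournamentOn A {y | A x y} ∧ AcyclicOn A {y | A y x}) :
    InRound A := by
  classical
  by_cases hcard : Fintype.card V ≤ 1
  · haveI : Subsingleton V := Fintype.card_le_one_iff_subsingleton.mp hcard
    refine ⟨Fintype.equivFin V, ?_⟩
    intro x y z hxy _
    exact absurd hxy (by rw [Subsingleton.elim x y]; exact fun h => hor.1 y h)
  · push_neg at hcard
    have hn : 2 ≤ Fintype.card V := hcard
    haveI : Nonempty V := Fintype.card_pos_iff.mp (by omega)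
    haveI : Nontrivial V := Fintype.one_lt_card_iff_nontrivial.mp hcard
    -- every vertex has an out-neighbour
    have hout : ∀ x : V, ∃ y, A x y := by
      intro x
      obtain ⟨y, hy⟩ := exists_ne x
      rcases (hstrong x y).cases_head with h | ⟨c, hc, _⟩
      · exact absurd h.symm hy
      · exact ⟨c, hc⟩
    have hdom : ∀ x : V, ∃ s, A x s ∧ ∀ y, A x y → y ≠ s → A s y :=
      fun x => Stmt1Aux.dom hor hstrong hloc x (hout x)
    choose f hf1 hf2 using hdom
    -- every arc target is on the forward f-orbit
    have horb : ∀ u y : V, A u y → ∃ m, 0 < m ∧ f^[m] u = y := by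
      intro u y huy
      by_contra hcon
      push_neg at hcon
      have hall : ∀ i, A (f^[i] u) y := by
        intro i
        induction i with
        | zero => simpa using huy
        | succ m ih =>
          have hne : y ≠ f (f^[m] u) := by
            have h := hcon (m + 1) (by omega)
            rw [Function.iterate_succ_apply'] at h
            exact fun hh => h hh.symm
          have := hf2 _ _ ih hne
          rwa [Function.iterate_succ_apply']
      have key : ∀ i j : ℕ, i < j → f^[i] u = f^[j] u → False := by
        intro i j hij heq
        have hTG : ∀ d : ℕ, Relation.TransGen
            (fun a' b' => a' ∈ {w | A w y} ∧ b' ∈ {w | A w y} ∧ A a' b')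
            (f^[i] u) (f^[i + d + 1] u) := by
          intro d
          induction d with
          | zero =>
            exact Relation.TransGen.single
              ⟨hall i, hall (i + 1), by
                rw [Function.iterate_succ_apply']; exact hf1 _⟩
          | succ d ihd =>
            exact ihd.tail ⟨hall (i + d + 1), hall (i + d + 2), by
              rw [show i + (d + 1) + 1 = (i + d + 1) + 1 by omega,
                Function.iterate_succ_apply' f (i + d + 1)]
              exact hf1 _⟩
        have h2 := hTG (j - i - 1)
        rw [show i + (j - i - 1) + 1 = j by omega, ← heq] at h2
        exact (hloc y).2 _ h2
      obtain ⟨i, j, hne, heq⟩ :=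
        Finite.exists_ne_map_eq_of_infinite (fun i : ℕ => f^[i] u)
      rcases hne.lt_or_gt with h | h
      · exact key _ _ h heq
      · exact key _ _ h heq.symm
    have hreach : ∀ u y : V, ∃ m, f^[m] u = y := by
      intro u y
      induction hstrong u y with
      | refl => exact ⟨0, rfl⟩
      | @tail b c hub hbc ih =>
        obtain ⟨m, hm⟩ := ih
        obtain ⟨m', _, hm'⟩ := horb b c hbc
        exact ⟨m' + m, by rw [Function.iterate_add_apply, hm, hm']⟩
    obtain ⟨v0⟩ := ‹Nonempty V›
    have hper : ∃ m, 0 < m ∧ f^[m] v0 = v0 := by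
      obtain ⟨m, hm⟩ := hreach (f v0) v0
      exact ⟨m + 1, by omega, by rw [Function.iterate_succ_apply]; exact hm⟩
    set p := Nat.find hper with hpdef
    obtain ⟨hppos, hpfix⟩ := Nat.find_spec hper
    have hpmin : ∀ m, m < p → ¬(0 < m ∧ f^[m] v0 = v0) :=
      fun m hm => Nat.find_min hper hm
    haveI : NeZero p := ⟨by omega⟩
    have hmul : ∀ q : ℕ, f^[p * q] v0 = v0 := by
      intro q
      induction q with
      | zero => simp
      | succ q ihq =>
        rw [Nat.mul_succ, Function.iterate_add_apply, hpfix, ihq]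
    have hmod : ∀ m : ℕ, f^[m] v0 = f^[m % p] v0 := by
      intro m
      conv_lhs => rw [show m = m % p + p * (m / p) from (Nat.mod_add_div m p).symm,
        Function.iterate_add_apply, hmul]
    let g0 : Fin p → V := fun i => f^[i.val] v0
    have hkey : ∀ i j : Fin p, i.val < j.val → g0 i = g0 j → False := by
      intro i j hij heq
      have h1 : f^[p - j.val + j.val] v0 = f^[p - j.val + i.val] v0 := by
        rw [Function.iterate_add_apply, Function.iterate_add_apply]
        exact congrArg _ heq.symm
      rw [show p - j.val + j.val = p by omega] at h1
      rw [hpfix] at h1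
      have hjlt : j.val < p := j.isLt
      exact hpmin (p - j.val + i.val) (by omega) ⟨by omega, h1.symm⟩
    have hbij0 : Function.Bijective g0 := by
      constructor
      · intro i j hij
        rcases lt_trichotomy i.val j.val with h | h | h
        · exact absurd hij (fun hh => hkey i j h hh)
        · exact Fin.ext h
        · exact absurd hij.symm (fun hh => hkey j i h hh)
      · intro y
        obtain ⟨m, hm⟩ := hreach v0 y
        exact ⟨⟨m % p, Nat.mod_lt _ hppos⟩, by
          show f^[m % p] v0 = y
          rw [← hmod]; exact hm⟩
    have hg0 : ∀ i : Fin p, f (g0 i) = g0 (i + 1) := by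
      intro i
      show f (f^[i.val] v0) = f^[(i + 1).val] v0
      rw [← Function.iterate_succ_apply' f i.val v0]
      have hval : (i + 1).val = (i.val + 1) % p := by
        simp [Fin.add_def, Fin.val_one', Nat.add_mod_mod]
      rw [hval, ← hmod]
    have hpn : p = Fintype.card V := by
      have := Fintype.card_of_bijective hbij0
      simpa using this
    haveI : NeZero (Fintype.card V) := ⟨by omega⟩
    let g1 : Fin (Fintype.card V) → V := fun i => g0 (finCongr hpn.symm i)
    have hbij1 : Function.Bijective g1 :=
      hbij0.comp (finCongr hpn.symm).bijective
    have hg1 : ∀ i, f (g1 i) = g1 (i + 1) := by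
      intro i
      show f (g0 (finCongr hpn.symm i)) = g0 (finCongr hpn.symm (i + 1))
      rw [Stmt1Aux.finCongr_add_one hpn.symm i, hg0]
    exact Stmt1Aux.final hn f hf2 g1 hbij1 hg1
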